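/- arXiv:1303.1265 — 2 statements merged into one kernel-verified Lean document; each statement's English description precedes it below -/
import Mathlib

section
/- Let Ψ : ℝ^N → ℝ be a homogeneous harmonic polynomial with Ψ(0) = 0 that is nonnegative and not identically zero on the upper half-space {x : x_N > 0}. Then Ψ is linear: there exists a constant C > 0 such that Ψ(x) = C·x_N for all x. -/
noncomputable def laplacian {N : ℕ} (f : EuclideanSpace ℝ (Fin N) → ℝ)
    (x : EuclideanSpace ℝ (Fin N)) : ℝ :=
  ∑ i : Fin N,
    fderiv ℝ (fun y => fderiv ℝ f y (EuclideanSpace.single i 1)) x (EuclideanSpace.single i 1)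

open MeasureTheory Real MvPolynomial Finset

namespace Stmt0Aux


noncomputable def gw (t : ℝ) : ℝ := Real.exp (-(1/2) * t ^ 2)

lemma gw_pos (t : ℝ) : 0 < gw t := Real.exp_pos _

lemma hasDerivAt_gw (x : ℝ) : HasDerivAt gw (-x * gw x) x := by
  have h : HasDerivAt (fun t : ℝ => -(1/2) * t ^ 2) (-(1/2) * (2 * x ^ 1)) x := by
    simpa using (hasDerivAt_pow 2 x).const_mul (-(1/2) : ℝ)
  have := h.exp
  convert this using 1
  all_goals (unfold gw; ring)

noncomputable def gm (n : ℕ) : ℝ := ∫ x : ℝ, x ^ n * gw x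

lemma integrable_pow_gw (n : ℕ) : Integrable fun x : ℝ => x ^ n * gw x := by
  have h := integrable_rpow_mul_exp_neg_mul_sq (b := 1/2) (by norm_num) (s := (n : ℝ))
    (by exact_mod_cast lt_of_lt_of_le (by norm_num : (-1:ℝ) < 0) (Nat.cast_nonneg n))
  simpa [gw, Real.rpow_natCast] using h

lemma gm_one : gm 1 = 0 := by
  have hd : ∀ x : ℝ, HasDerivAt (fun t : ℝ => -gw t) (x ^ 1 * gw x) x := by
    intro x
    have h2 := (hasDerivAt_gw x).neg
    convert! h2 using 1
    ring
  have := integral_eq_zero_of_hasDerivAt_of_integrable hd (integrable_pow_gw 1)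
    (((integrable_pow_gw 0).congr (by filter_upwards with x; simp)).neg)
  simpa [gm] using this

lemma gm_rec (n : ℕ) : gm (n + 2) = (n + 1) * gm n := by
  have hd : ∀ x : ℝ, HasDerivAt (fun t : ℝ => t ^ (n+1) * gw t)
      ((n+1 : ℝ) * (x ^ n * gw x) - x ^ (n + 2) * gw x) x := by
    intro x
    have h1 : HasDerivAt (fun t : ℝ => t ^ (n+1)) ((n+1 : ℝ) * x ^ n) x := by
      simpa using hasDerivAt_pow (n+1) x
    have := h1.mul (hasDerivAt_gw x)
    convert! this using 1
    ring
  have hint : Integrable (fun x : ℝ => (n+1 : ℝ) * (x ^ n * gw x) - x ^ (n + 2) * gw x) :=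
    ((integrable_pow_gw n).const_mul _).sub (integrable_pow_gw (n+2))
  have h0 := integral_eq_zero_of_hasDerivAt_of_integrable hd hint (integrable_pow_gw (n+1))
  have hsub := integral_sub ((integrable_pow_gw n).const_mul ((n:ℝ)+1)) (integrable_pow_gw (n+2))
  rw [h0] at hsub
  have h2 : ∫ x : ℝ, (n+1 : ℝ) * (x ^ n * gw x) = (n+1 : ℝ) * gm n := by
    rw [integral_const_mul]; rfl
  rw [h2] at hsub
  have : (n+1:ℝ) * gm n - gm (n+2) = 0 := by simpa [gm] using hsub.symm
  linarith




variable {N : ℕ}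

noncomputable def Tm (α : Fin N →₀ ℕ) : ℝ := ∏ i, gm (α i)

noncomputable def T (P : MvPolynomial (Fin N) ℝ) : ℝ := (AddMonoidAlgebra.coeff P).sum fun α c => c * Tm α

lemma T_monomial (α : Fin N →₀ ℕ) (c : ℝ) : T (monomial α c) = c * Tm α := by
  rw [T, sum_monomial_eq]; simp

lemma T_add (p q : MvPolynomial (Fin N) ℝ) : T (p + q) = T p + T q := by
  unfold T
  apply Finsupp.sum_add_index
  · intro a _; simp
  · intro a _ b₁ b₂; ring

lemma Tm_succ_eq (α : Fin N →₀ ℕ) (i : Fin N) :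
    Tm (α + Finsupp.single i 1) = (α i) * Tm (α - Finsupp.single i 1) := by
  classical
  have hsplit : ∀ β : Fin N →₀ ℕ, Tm β = gm (β i) * ∏ j ∈ univ.erase i, gm (β j) := by
    intro β
    rw [Tm, ← Finset.mul_prod_erase univ _ (mem_univ i)]
  rw [hsplit, hsplit]
  have hrest : ∀ j ∈ univ.erase i,
      gm ((α + Finsupp.single i 1 : Fin N →₀ ℕ) j) = gm ((α - Finsupp.single i 1 : Fin N →₀ ℕ) j) := by
    intro j hj
    have hji : j ≠ i := (Finset.mem_erase.mp hj).1
    simp [Finsupp.single_apply, Ne.symm hji]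
  rw [Finset.prod_congr rfl hrest]
  have hi1 : (α + Finsupp.single i 1 : Fin N →₀ ℕ) i = α i + 1 := by simp
  have hi2 : (α - Finsupp.single i 1 : Fin N →₀ ℕ) i = α i - 1 := by simp [Finsupp.tsub_apply]
  rw [hi1, hi2]
  rcases Nat.eq_zero_or_pos (α i) with h | h
  · simp [h, gm_one]
  · obtain ⟨k, hk⟩ : ∃ k, α i = k + 1 := ⟨α i - 1, (Nat.succ_pred_eq_of_pos h).symm⟩
    rw [hk, show k + 1 + 1 = k + 2 from rfl, gm_rec, show k + 1 - 1 = k from rfl]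
    push_cast
    ring

lemma T_X_mul (i : Fin N) (P : MvPolynomial (Fin N) ℝ) :
    T (X i * P) = T (pderiv i P) := by
  induction P using MvPolynomial.induction_on' with
  | monomial α c =>
    rw [show (X i : MvPolynomial (Fin N) ℝ) = monomial (Finsupp.single i 1) 1 from rfl,
      monomial_mul, pderiv_monomial, T_monomial, T_monomial]
    rw [show Finsupp.single i 1 + α = α + Finsupp.single i 1 from add_comm _ _, Tm_succ_eq]
    push_cast
    ring
  | add p q hp hq =>
    rw [mul_add, T_add, hp, hq, map_add, T_add]

lemma T_C_mul (r : ℝ) (P : MvPolynomial (Fin N) ℝ) : T (C r * P) = r * T P := by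
  induction P using MvPolynomial.induction_on' with
  | monomial α c =>
    rw [show (C r : MvPolynomial (Fin N) ℝ) = monomial 0 r from rfl, monomial_mul,
      T_monomial, T_monomial, zero_add]
    ring
  | add p q hp hq => rw [mul_add, T_add, hp, hq, T_add]; ring

lemma degree_eq_sum_univ (α : Fin N →₀ ℕ) : (α.degree : ℝ) = ∑ i, (α i : ℝ) := by
  rw [Finsupp.degree_apply]
  rw [Finset.sum_subset (Finset.subset_univ α.support)]
  · push_cast; ring
  · intro i _ hi
    simp [Finsupp.notMem_support_iff.mp hi]

lemma euler_monomial (α : Fin N →₀ ℕ) (c : ℝ) :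
    ∑ i, X i * pderiv i (monomial α c) = C (α.degree : ℝ) * monomial α c := by
  classical
  have hterm : ∀ i : Fin N, X i * pderiv i (monomial α c) = monomial α ((α i : ℝ) * c) := by
    intro i
    rw [pderiv_monomial, show (X i : MvPolynomial (Fin N) ℝ) = monomial (Finsupp.single i 1) 1
      from rfl, monomial_mul]
    rcases Nat.eq_zero_or_pos (α i) with h | h
    · simp [h]
    · have : Finsupp.single i 1 + (α - Finsupp.single i 1) = α := by
        ext j
        rcases eq_or_ne j i with rfl | hji
        · simp [Finsupp.single_apply]
          omega
        · simp [Finsupp.single_apply, Ne.symm hji]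
      rw [this]
      congr 1
      ring
  rw [Finset.sum_congr rfl fun i _ => hterm i, ← map_sum, C_mul_monomial]
  congr 1
  rw [← Finset.sum_mul, ← degree_eq_sum_univ]

lemma euler {P : MvPolynomial (Fin N) ℝ} {d : ℕ} (h : P.IsHomogeneous d) :
    ∑ i, X i * pderiv i P = C (d : ℝ) * P := by
  classical
  have hP : ∀ i, pderiv i P = ∑ α ∈ P.support, pderiv i (monomial α (coeff α P)) := by
    intro i
    rw [← map_sum, ← P.as_sum]
  calc ∑ i, X i * pderiv i P
      = ∑ i, ∑ α ∈ P.support, X i * pderiv i (monomial α (coeff α P)) := by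
        refine Finset.sum_congr rfl fun i _ => ?_
        rw [hP, Finset.mul_sum]
    _ = ∑ α ∈ P.support, ∑ i, X i * pderiv i (monomial α (coeff α P)) := Finset.sum_comm
    _ = ∑ α ∈ P.support, C (d : ℝ) * monomial α (coeff α P) := by
        refine Finset.sum_congr rfl fun α hα => ?_
        rw [euler_monomial]
        have hw : α.degree = d := by
          have := h (mem_support_iff.mp hα)
          rwa [show (Finsupp.weight 1 : (Fin N →₀ ℕ) →+ ℕ) = Finsupp.weight (fun _ => 1) from rfl,
            ← Finsupp.degree_eq_weight_one] at this
        rw [hw]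
    _ = C (d : ℝ) * P := by rw [← Finset.mul_sum, ← P.as_sum]



variable {N : ℕ}

noncomputable def FD (P : MvPolynomial (Fin N) ℝ) (x : EuclideanSpace ℝ (Fin N)) :
    EuclideanSpace ℝ (Fin N) →L[ℝ] ℝ :=
  ∑ i, eval (fun j => x j) (pderiv i P) •
    (EuclideanSpace.proj i : EuclideanSpace ℝ (Fin N) →L[ℝ] ℝ)

lemma FD_apply (P : MvPolynomial (Fin N) ℝ) (x v : EuclideanSpace ℝ (Fin N)) :
    FD P x v = ∑ i, eval (fun j => x j) (pderiv i P) * v i := by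
  simp [FD, ContinuousLinearMap.sum_apply]

lemma hasFDerivAt_eval (P : MvPolynomial (Fin N) ℝ) (x : EuclideanSpace ℝ (Fin N)) :
    HasFDerivAt (fun y : EuclideanSpace ℝ (Fin N) => eval (fun i => y i) P) (FD P x) x := by
  induction P using MvPolynomial.induction_on with
  | C a =>
    have : HasFDerivAt (fun _ : EuclideanSpace ℝ (Fin N) => a)
        (0 : EuclideanSpace ℝ (Fin N) →L[ℝ] ℝ) x := hasFDerivAt_const a x
    convert this using 1
    · funext y; simp
    · ext v; simp [FD_apply]
  | add p q hp hq =>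
    have := hp.add hq
    convert! this using 1
    · funext y; simp
    · ext v; simp [FD_apply, add_mul, Finset.sum_add_distrib]
  | mul_X p n hp =>
    have hn : HasFDerivAt (fun y : EuclideanSpace ℝ (Fin N) => y n)
        (EuclideanSpace.proj n : EuclideanSpace ℝ (Fin N) →L[ℝ] ℝ) x :=
      by exact ContinuousLinearMap.hasFDerivAt (EuclideanSpace.proj (𝕜 := ℝ) (ι := Fin N) n)
    have := hp.mul hn
    convert! this using 1
    · funext y; simp
    · ext v
      rw [FD_apply]
      simp only [ContinuousLinearMap.add_apply, ContinuousLinearMap.smul_apply, FD_apply,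
        smul_eq_mul]
      classical
      have hterm : ∀ i : Fin N, eval (fun j => x j) (pderiv i (p * X n)) * v i
          = (x n * eval (fun j => x j) (pderiv i p)) * v i
            + (if i = n then eval (fun j => x j) p * v i else 0) := by
        intro i
        rw [pderiv_mul]
        rcases eq_or_ne i n with rfl | hin
        · simp [pderiv_X_self]
          ring
        · rw [pderiv_X_of_ne (Ne.symm hin)]
          simp only [mul_zero, add_zero, eval_mul, eval_X, if_neg hin]
          ring
      rw [Finset.sum_congr rfl fun i _ => hterm i, Finset.sum_add_distrib, Finset.sum_ite_eq'
        univ n (fun i => eval (fun j => x j) p * v i)]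
      have hproj : (EuclideanSpace.proj (𝕜 := ℝ) (ι := Fin N) n) v = v n := rfl
      rw [hproj, if_pos (Finset.mem_univ n), Finset.mul_sum, add_comm]
      congr 1
      refine Finset.sum_congr rfl fun i _ => by ring

lemma fderiv_eval_apply (P : MvPolynomial (Fin N) ℝ) (x : EuclideanSpace ℝ (Fin N)) (i : Fin N) :
    fderiv ℝ (fun y : EuclideanSpace ℝ (Fin N) => eval (fun j => y j) P) x
      (EuclideanSpace.single i 1) = eval (fun j => x j) (pderiv i P) := by
  classical
  rw [(hasFDerivAt_eval P x).fderiv, FD_apply]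
  rw [Finset.sum_eq_single i]
  · simp [EuclideanSpace.single_apply]
  · intro j _ hj
    simp [EuclideanSpace.single_apply, if_neg hj]
  · simp

lemma laplacian_eval (P : MvPolynomial (Fin N) ℝ) (x : EuclideanSpace ℝ (Fin N)) :
    laplacian (fun y : EuclideanSpace ℝ (Fin N) => eval (fun j => y j) P) x
      = eval (fun j => x j) (∑ i, pderiv i (pderiv i P)) := by
  rw [laplacian, map_sum]
  refine Finset.sum_congr rfl fun i _ => ?_
  have h1 : (fun y : EuclideanSpace ℝ (Fin N) =>
      fderiv ℝ (fun z : EuclideanSpace ℝ (Fin N) => eval (fun j => z j) P) y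
        (EuclideanSpace.single i 1))
      = fun y : EuclideanSpace ℝ (Fin N) => eval (fun j => y j) (pderiv i P) := by
    funext y
    exact fderiv_eval_apply P y i
  rw [h1, fderiv_eval_apply]





noncomputable def W (x : EuclideanSpace ℝ (Fin N)) : ℝ := ∏ i, gw (x i)

lemma W_pos (x : EuclideanSpace ℝ (Fin N)) : 0 < W x :=
  Finset.prod_pos fun i _ => gw_pos (x i)

lemma T_spec (P : MvPolynomial (Fin N) ℝ) :
    Integrable (fun x : EuclideanSpace ℝ (Fin N) => eval (fun i => x i) P * W x)
      ∧ (∫ x : EuclideanSpace ℝ (Fin N), eval (fun i => x i) P * W x) = T P := by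
  induction P using MvPolynomial.induction_on' with
  | monomial α c =>
    have hfun : (fun x : EuclideanSpace ℝ (Fin N) => eval (fun i => x i) (monomial α c) * W x)
        = fun x : EuclideanSpace ℝ (Fin N) => c * ∏ i, ((x i) ^ (α i) * gw (x i)) := by
      funext x
      have hprod : (α.prod fun n e => (x n : ℝ) ^ e) = ∏ i, (x i) ^ (α i) :=
        Finsupp.prod_fintype α (fun i k => (x i) ^ k) (fun i => pow_zero _)
      rw [eval_monomial, hprod, W, Finset.prod_mul_distrib]
      ring
    have hm := EuclideanSpace.volume_preserving_symm_measurableEquiv_toLp (Fin N)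
    have hemb := (MeasurableEquiv.toLp 2 (Fin N → ℝ)).symm.measurableEmbedding
    set F : (Fin N → ℝ) → ℝ := fun y => c * ∏ i, ((y i) ^ (α i) * gw (y i)) with hF
    have hFcomp : (fun x : EuclideanSpace ℝ (Fin N) => c * ∏ i, ((x i) ^ (α i) * gw (x i)))
        = F ∘ (MeasurableEquiv.toLp 2 (Fin N → ℝ)).symm := rfl
    have hFint : Integrable F := by
      exact (Integrable.fintype_prod (f := fun i (t : ℝ) => t ^ (α i) * gw t)
        fun i => integrable_pow_gw (α i)).const_mul c
    constructor
    · rw [hfun, hFcomp]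
      exact (hm.integrable_comp_emb hemb).mpr hFint
    · rw [hfun, hFcomp]
      rw [Function.comp_def, hm.integral_comp hemb F]
      rw [hF]
      rw [integral_const_mul, integral_fintype_prod_volume_eq_prod (f := fun i (t : ℝ) => t ^ (α i) * gw t)]
      rw [T_monomial, Tm]
      rfl
  | add p q hp hq =>
    have hfun : (fun x : EuclideanSpace ℝ (Fin N) => eval (fun i => x i) (p + q) * W x)
        = fun x : EuclideanSpace ℝ (Fin N) =>
          eval (fun i => x i) p * W x + eval (fun i => x i) q * W x := by
      funext x; rw [map_add]; ring
    refine ⟨by rw [hfun]; exact hp.1.add hq.1, ?_⟩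
    rw [hfun, integral_add hp.1 hq.1, hp.2, hq.2, T_add]



variable {N : ℕ}

lemma eval_smul_of_isHomogeneous (Q : MvPolynomial (Fin N) ℝ) {n : ℕ}
    (h : Q.IsHomogeneous n) (t : ℝ) (f : Fin N → ℝ) :
    eval (fun i => t * f i) Q = t ^ n * eval f Q := by
  classical
  conv_lhs => rw [Q.as_sum]
  conv_rhs => rw [Q.as_sum]
  rw [map_sum, map_sum, Finset.mul_sum]
  refine Finset.sum_congr rfl fun α hα => ?_
  rw [eval_monomial, eval_monomial]
  have h1 : (α.prod fun i k => (t * f i) ^ k)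
      = (∏ i ∈ α.support, t ^ (α i)) * α.prod fun i k => (f i) ^ k := by
    rw [Finsupp.prod, Finsupp.prod, ← Finset.prod_mul_distrib]
    exact Finset.prod_congr rfl fun i _ => mul_pow _ _ _
  have h2 : (∏ i ∈ α.support, t ^ (α i)) = t ^ n := by
    rw [Finset.prod_pow_eq_pow_sum]
    congr 1
    have := h (mem_support_iff.mp hα)
    rwa [show (Finsupp.weight 1 : (Fin N →₀ ℕ) →+ ℕ) = Finsupp.weight (fun _ => 1) from rfl,
      ← Finsupp.degree_eq_weight_one] at this
  rw [h1, h2]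
  ring

lemma component_eval (P : MvPolynomial (Fin N) ℝ) (Ψ : EuclideanSpace ℝ (Fin N) → ℝ)
    (hP : ∀ x : EuclideanSpace ℝ (Fin N), Ψ x = eval (fun i => x i) P)
    (d : ℕ)
    (hhom : ∀ (t : ℝ), 0 < t → ∀ x : EuclideanSpace ℝ (Fin N), Ψ (t • x) = t ^ d * Ψ x)
    (x : EuclideanSpace ℝ (Fin N)) :
    eval (fun i => x i) (homogeneousComponent d P) = Ψ x := by
  classical
  set n := P.totalDegree with hn
  set pol : Polynomial ℝ := ∑ k ∈ Finset.range (n + 1),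
    Polynomial.C (eval (fun i => x i) (homogeneousComponent k P)) * Polynomial.X ^ k with hpol
  have heval : ∀ t : ℝ, pol.eval t = Ψ (t • x) := by
    intro t
    have hx : Ψ (t • x) = eval (fun i => t * x i) P := by
      rw [hP]
      congr 1
    rw [hx]
    conv_rhs => rw [← P.sum_homogeneousComponent]
    rw [map_sum]
    rw [hpol, Polynomial.eval_finset_sum]
    refine Finset.sum_congr rfl fun k _ => ?_
    rw [Polynomial.eval_mul, Polynomial.eval_C, Polynomial.eval_pow, Polynomial.eval_X]
    rw [eval_smul_of_isHomogeneous _ (homogeneousComponent_isHomogeneous k P) t]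
    ring
  have hpol2 : pol = Polynomial.C (Ψ x) * Polynomial.X ^ d := by
    have hroot : ∀ t : ℝ, 0 < t → (pol - Polynomial.C (Ψ x) * Polynomial.X ^ d).eval t = 0 := by
      intro t ht
      rw [Polynomial.eval_sub, heval, hhom t ht]
      simp
      ring
    have hinf : Set.Infinite {t : ℝ | (pol - Polynomial.C (Ψ x) * Polynomial.X ^ d).IsRoot t} := by
      apply Set.Infinite.mono (s := Set.Ioi (0:ℝ))
      · intro t ht
        exact hroot t ht
      · exact Set.Ioi_infinite 0
    have := Polynomial.eq_zero_of_infinite_isRoot _ hinf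
    exact sub_eq_zero.mp this
  have hco := congrArg (fun q : Polynomial ℝ => q.coeff d) hpol2
  have hlhs : pol.coeff d
      = if d ∈ Finset.range (n + 1) then eval (fun i => x i) (homogeneousComponent d P)
        else 0 := by
    rw [hpol, Polynomial.finset_sum_coeff]
    simp only [Polynomial.coeff_C_mul, Polynomial.coeff_X_pow, mul_ite, mul_one, mul_zero]
    exact Finset.sum_ite_eq (Finset.range (n + 1)) d
      (fun k => eval (fun i => x i) (homogeneousComponent k P))
  have hrhs : (Polynomial.C (Ψ x) * Polynomial.X ^ d).coeff d = Ψ x := by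
    simp
  rw [hlhs, hrhs] at hco
  by_cases hdn : d ∈ Finset.range (n + 1)
  · rwa [if_pos hdn] at hco
  · rw [if_neg hdn] at hco
    have hz : homogeneousComponent d P = 0 := by
      apply homogeneousComponent_eq_zero
      simp only [Finset.mem_range, Nat.lt_succ_iff, not_le] at hdn
      exact hdn
    rw [hz, ← hco]
    simp


lemma gw_continuous : Continuous gw := by
  unfold gw
  fun_prop

lemma T_zero {N : ℕ} : T (0 : MvPolynomial (Fin N) ℝ) = 0 := by simp [T]

lemma T_finset_sum {N : ℕ} {κ : Type*} (s : Finset κ) (f : κ → MvPolynomial (Fin N) ℝ) :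
    T (∑ i ∈ s, f i) = ∑ i ∈ s, T (f i) := by
  classical
  induction s using Finset.induction_on with
  | empty => simp [T_zero]
  | insert _ _ h ih => rw [Finset.sum_insert h, T_add, ih, Finset.sum_insert h]

lemma T_eq_zero_of_harmonic {N : ℕ} {Q : MvPolynomial (Fin N) ℝ} {d : ℕ} (hd : 1 ≤ d)
    (hhom : Q.IsHomogeneous d) (hlap : (∑ i, pderiv i (pderiv i Q)) = 0) : T Q = 0 := by
  have h1 : T (C (d : ℝ) * Q) = T (∑ i, X i * pderiv i Q) := by rw [euler hhom]
  rw [T_C_mul, T_finset_sum] at h1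
  rw [Finset.sum_congr rfl fun i _ => T_X_mul i (pderiv i Q), ← T_finset_sum, hlap, T_zero] at h1
  have hne : (d : ℝ) ≠ 0 := Nat.cast_ne_zero.mpr (by omega)
  exact (mul_eq_zero.mp h1).resolve_left hne

end Stmt0Aux
open Stmt0Aux in
/-- A homogeneous harmonic polynomial, vanishing at the origin, nonnegative and not
identically zero on the upper half-space, is linear: `Ψ x = C * x_N` with `C > 0`. -/
theorem stmt_0 (N : ℕ) (hN : 2 ≤ N) (iN : Fin N) (hiN : (iN : ℕ) = N - 1)
    (Ψ : EuclideanSpace ℝ (Fin N) → ℝ)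
    (P : MvPolynomial (Fin N) ℝ) (hP : ∀ x, Ψ x = MvPolynomial.eval (fun i => x i) P)
    (d : ℕ) (hd : 1 ≤ d)
    (hhom : ∀ (t : ℝ), 0 < t → ∀ x, Ψ (t • x) = t ^ d * Ψ x)
    (hharm : ∀ x, laplacian Ψ x = 0)
    (h0 : Ψ 0 = 0)
    (hnonneg : ∀ x : EuclideanSpace ℝ (Fin N), 0 < x iN → 0 ≤ Ψ x)
    (hnontriv : ¬ (∀ x : EuclideanSpace ℝ (Fin N), 0 < x iN → Ψ x = 0)) :
    ∃ C : ℝ, 0 < C ∧ ∀ x : EuclideanSpace ℝ (Fin N), Ψ x = C * x iN := by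
  classical
  set Q : MvPolynomial (Fin N) ℝ := MvPolynomial.homogeneousComponent d P with hQdef
  have hQ : ∀ x : EuclideanSpace ℝ (Fin N), MvPolynomial.eval (fun i => x i) Q = Ψ x :=
    fun x => component_eval P Ψ hP d hhom x
  have hQhom : Q.IsHomogeneous d := MvPolynomial.homogeneousComponent_isHomogeneous d P
  have hΨfun : Ψ = fun y : EuclideanSpace ℝ (Fin N) => MvPolynomial.eval (fun i => y i) Q := by
    funext y; rw [hQ]
  -- homogeneity for all t
  have hhom' : ∀ (t : ℝ) (x : EuclideanSpace ℝ (Fin N)), Ψ (t • x) = t ^ d * Ψ x := by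
    intro t x
    rw [← hQ (t • x), ← hQ x]
    have h1 : (fun i => (t • x) i) = fun i => t * x i := rfl
    rw [h1]
    exact eval_smul_of_isHomogeneous Q hQhom t (fun i => x i)
  -- polynomial Laplacian vanishes
  have hlap : (∑ i : Fin N, MvPolynomial.pderiv i (MvPolynomial.pderiv i Q)) = 0 := by
    apply MvPolynomial.funext
    intro f
    have h1 : MvPolynomial.eval (fun j => (WithLp.toLp 2 f) j)
        (∑ i : Fin N, MvPolynomial.pderiv i (MvPolynomial.pderiv i Q))
        = laplacian Ψ (WithLp.toLp 2 f) := by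
      rw [hΨfun]
      exact (laplacian_eval Q _).symm
    have h2 : MvPolynomial.eval f
        (∑ i : Fin N, MvPolynomial.pderiv i (MvPolynomial.pderiv i Q))
        = MvPolynomial.eval (fun j => (WithLp.toLp 2 f) j)
          (∑ i : Fin N, MvPolynomial.pderiv i (MvPolynomial.pderiv i Q)) := rfl
    rw [h2, h1, hharm, map_zero]
  -- main case split
  by_cases hd1 : d = 1
  · -- linear case
    subst hd1
    set L : EuclideanSpace ℝ (Fin N) →L[ℝ] ℝ := FD Q 0 with hL
    have hFD : HasFDerivAt Ψ L 0 := by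
      rw [hΨfun]; exact hasFDerivAt_eval Q 0
    have hlin : ∀ x : EuclideanSpace ℝ (Fin N), Ψ x = L x := by
      intro x
      have hsm : HasDerivAt (fun t : ℝ => t • x) x 0 := by
        simpa using (hasDerivAt_id (0:ℝ)).smul_const x
      have h1 : HasDerivAt (fun t : ℝ => Ψ (t • x)) (L x) 0 := by
        have h0x : HasFDerivAt Ψ L ((0:ℝ) • x) := by rwa [zero_smul]
        exact h0x.comp_hasDerivAt 0 hsm
      have hfe : (fun t : ℝ => Ψ (t • x)) = fun t : ℝ => t * Ψ x := by
        funext t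
        rw [hhom' t x, pow_one]
      rw [hfe] at h1
      have h2 : HasDerivAt (fun t : ℝ => t * Ψ x) (Ψ x) 0 := hasDerivAt_mul_const (Ψ x)
      exact h2.unique h1
    set a : Fin N → ℝ := fun i => Ψ (EuclideanSpace.single i 1) with ha_def
    have hxsum : ∀ x : EuclideanSpace ℝ (Fin N),
        ∑ i, x i • EuclideanSpace.single i (1:ℝ) = x := by
      intro x
      ext j
      rw [WithLp.ofLp_sum, Finset.sum_apply]
      simp [EuclideanSpace.single_apply]
    have hlin2 : ∀ x : EuclideanSpace ℝ (Fin N), Ψ x = ∑ i, x i * a i := by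
      intro x
      rw [hlin x]
      conv_lhs => rw [← hxsum x]
      rw [map_sum]
      refine Finset.sum_congr rfl fun i _ => ?_
      rw [L.map_smul, smul_eq_mul, ← hlin (EuclideanSpace.single i 1)]
    have hzero : ∀ i, i ≠ iN → a i = 0 := by
      intro i hi
      by_contra hne
      set s : ℝ := -(a iN + 1) / a i with hs
      set v : EuclideanSpace ℝ (Fin N) :=
        s • EuclideanSpace.single i 1 + EuclideanSpace.single iN (1:ℝ) with hv
      have hviN : v iN = 1 := by
        have : v iN = s * (EuclideanSpace.single i (1:ℝ)) iN
            + (EuclideanSpace.single iN (1:ℝ)) iN := rfl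
        rw [this, EuclideanSpace.single_apply, EuclideanSpace.single_apply]
        rw [if_neg (Ne.symm hi), if_pos rfl]
        ring
      have hΨv : Ψ v = s * a i + a iN := by
        rw [hlin v, hv, map_add, L.map_smul, smul_eq_mul, ← hlin (EuclideanSpace.single i 1),
          ← hlin (EuclideanSpace.single iN 1)]
      have hge := hnonneg v (by rw [hviN]; norm_num)
      rw [hΨv, hs, div_mul_cancel₀ _ hne] at hge
      linarith
    have haiN : ∀ x : EuclideanSpace ℝ (Fin N), Ψ x = a iN * x iN := by
      intro x
      rw [hlin2 x, Finset.sum_eq_single iN]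
      · ring
      · intro j _ hj
        rw [hzero j hj, mul_zero]
      · intro h; exact absurd (Finset.mem_univ iN) h
    have hay : 0 ≤ a iN := by
      have h1 : (EuclideanSpace.single iN (1:ℝ)) iN = 1 := by
        rw [EuclideanSpace.single_apply, if_pos rfl]
      have := hnonneg (EuclideanSpace.single iN 1) (by rw [h1]; norm_num)
      simpa [ha_def] using this
    have hapos : 0 < a iN := by
      rcases lt_or_eq_of_le hay with h | h
      · exact h
      · exfalso
        apply hnontriv
        intro x _
        rw [haiN x, ← h, zero_mul]
    exact ⟨a iN, hapos, haiN⟩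
  · -- contradiction cases
    exfalso
    push_neg at hnontriv
    obtain ⟨x₀, hx₀pos, hx₀ne⟩ := hnontriv
    have hd2 : 2 ≤ d := by omega
    -- continuity
    have hQcont : Continuous fun x : EuclideanSpace ℝ (Fin N) =>
        MvPolynomial.eval (fun i => x i) Q := by
      have : Differentiable ℝ fun x : EuclideanSpace ℝ (Fin N) =>
          MvPolynomial.eval (fun i => x i) Q :=
        fun x => (hasFDerivAt_eval Q x).differentiableAt
      exact this.continuous
    have hWcont : Continuous (W (N := N)) := by
      apply continuous_finset_prod
      intro i _
      exact gw_continuous.comp (EuclideanSpace.proj (𝕜 := ℝ) i).continuous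
    -- hyperplane is null
    have hnull : volume {x : EuclideanSpace ℝ (Fin N) | x iN = 0} = 0 := by
      have hsub : {x : EuclideanSpace ℝ (Fin N) | x iN = 0}
          = (LinearMap.ker (EuclideanSpace.projₗ (𝕜 := ℝ) (ι := Fin N) iN) :
              Submodule ℝ (EuclideanSpace ℝ (Fin N))) := by
        ext x
        simp only [Set.mem_setOf_eq, SetLike.mem_coe, LinearMap.mem_ker]
        exact Iff.rfl
      rw [hsub]
      apply Measure.addHaar_submodule
      intro htop
      have h1 : EuclideanSpace.single iN (1:ℝ) ∈
          LinearMap.ker (EuclideanSpace.projₗ (𝕜 := ℝ) (ι := Fin N) iN) := by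
        rw [htop]; trivial
      rw [LinearMap.mem_ker] at h1
      have h2 : (EuclideanSpace.single iN (1:ℝ)) iN = 1 := by
        rw [EuclideanSpace.single_apply, if_pos rfl]
      have h3 : (EuclideanSpace.projₗ (𝕜 := ℝ) (ι := Fin N) iN)
          (EuclideanSpace.single iN (1:ℝ)) = 1 := h2
      rw [h1] at h3
      norm_num at h3
    have hae0 : ∀ᵐ x : EuclideanSpace ℝ (Fin N), x iN ≠ 0 := by
      rw [ae_iff]
      simpa using hnull
    -- sign of Ψ at negative coordinate
    have hneg : ∀ x : EuclideanSpace ℝ (Fin N), x iN < 0 → Ψ x = (-1:ℝ)^d * Ψ (-x) := by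
      intro x hx
      have h1 : Ψ ((-1:ℝ) • (-x)) = (-1:ℝ)^d * Ψ (-x) := hhom' (-1) (-x)
      have h2 : ((-1:ℝ) • (-x)) = x := by
        rw [neg_one_smul, neg_neg]
      conv_lhs => rw [← h2]
      exact h1
    have hnegpos : ∀ x : EuclideanSpace ℝ (Fin N), x iN < 0 → (0:ℝ) ≤ Ψ (-x) := by
      intro x hx
      apply hnonneg
      have : (-x) iN = -(x iN) := rfl
      rw [this]
      linarith
    rcases Nat.even_or_odd d with hev | hodd
    · -- even case : Ψ ≥ 0 a.e., T Q = 0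
      have hTQ : T Q = 0 := T_eq_zero_of_harmonic hd hQhom hlap
      have hae : ∀ᵐ x : EuclideanSpace ℝ (Fin N),
          0 ≤ MvPolynomial.eval (fun i => x i) Q * W x := by
        filter_upwards [hae0] with x hx
        rcases lt_or_gt_of_ne hx with h | h
        · have := hneg x h
          rw [hev.neg_one_pow, one_mul] at this
          rw [hQ x, this]
          exact mul_nonneg (hnegpos x h) (W_pos x).le
        · rw [hQ x]
          exact mul_nonneg (hnonneg x h) (W_pos x).le
      have hint := (T_spec Q).1
      have hI : (∫ x : EuclideanSpace ℝ (Fin N),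
          MvPolynomial.eval (fun i => x i) Q * W x) = 0 := by
        rw [(T_spec Q).2, hTQ]
      have hz := (integral_eq_zero_iff_of_nonneg_ae hae hint).mp hI
      have hfz : (fun x : EuclideanSpace ℝ (Fin N) =>
          MvPolynomial.eval (fun i => x i) Q * W x) = fun _ => 0 :=
        ((hQcont.mul hWcont).ae_eq_iff_eq volume continuous_const).mp hz
      apply hx₀ne
      have := congrFun hfz x₀
      rw [← hQ x₀]
      exact (mul_eq_zero.mp this).resolve_right (W_pos x₀).ne'
    · -- odd case
      set R : MvPolynomial (Fin N) ℝ := MvPolynomial.X iN * Q with hR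
      have hΔR : (∑ i : Fin N, MvPolynomial.pderiv i (MvPolynomial.pderiv i R))
          = MvPolynomial.C (2:ℝ) * MvPolynomial.pderiv iN Q := by
        have hterm : ∀ i : Fin N,
            MvPolynomial.pderiv i (MvPolynomial.pderiv i R)
            = MvPolynomial.X iN * MvPolynomial.pderiv i (MvPolynomial.pderiv i Q)
              + (if i = iN then MvPolynomial.C (2:ℝ) * MvPolynomial.pderiv iN Q else 0) := by
          intro i
          rcases eq_or_ne i iN with rfl | hi
          · rw [if_pos rfl, hR]
            rw [MvPolynomial.pderiv_mul, MvPolynomial.pderiv_X_self, one_mul, map_add,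
              MvPolynomial.pderiv_mul, MvPolynomial.pderiv_X_self, one_mul]
            rw [show (MvPolynomial.C (2:ℝ) : MvPolynomial (Fin N) ℝ) = 2 from map_ofNat _ 2]
            ring
          · rw [if_neg hi, hR]
            rw [MvPolynomial.pderiv_mul, MvPolynomial.pderiv_X_of_ne (Ne.symm hi), zero_mul,
              zero_add, MvPolynomial.pderiv_mul, MvPolynomial.pderiv_X_of_ne (Ne.symm hi),
              zero_mul, zero_add, add_zero]
        rw [Finset.sum_congr rfl fun i _ => hterm i, Finset.sum_add_distrib,
          Finset.sum_ite_eq' Finset.univ iN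
            (fun _ => MvPolynomial.C (2:ℝ) * MvPolynomial.pderiv iN Q),
          if_pos (Finset.mem_univ iN), ← Finset.mul_sum, hlap, mul_zero, zero_add]
      have hRhom : R.IsHomogeneous (1 + d) :=
        (MvPolynomial.isHomogeneous_X _ _).mul hQhom
      -- (1+d) T R = 2 T R
      have h1 : T (MvPolynomial.C ((1 + d : ℕ) : ℝ) * R)
          = T (∑ i : Fin N, MvPolynomial.X i * MvPolynomial.pderiv i R) := by
        rw [euler hRhom]
      rw [T_C_mul, T_finset_sum] at h1
      rw [Finset.sum_congr rfl fun i _ => T_X_mul i (MvPolynomial.pderiv i R),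
        ← T_finset_sum, hΔR, T_C_mul] at h1
      have h2 : T (MvPolynomial.pderiv iN Q) = T R := by
        rw [← T_X_mul iN Q]
      rw [h2] at h1
      have hTR : T R = 0 := by
        have : ((1:ℝ) + d) * T R = 2 * T R := by
          have : (((1 + d : ℕ) : ℝ)) = (1:ℝ) + d := by push_cast; ring
          rw [this] at h1
          exact h1
        have hdr : ((d:ℝ) - 1) * T R = 0 := by linarith
        have hne : ((d:ℝ) - 1) ≠ 0 := by
          have : (2:ℝ) ≤ (d:ℝ) := by exact_mod_cast hd2
          linarith
        exact (mul_eq_zero.mp hdr).resolve_left hne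
      have hevalR : ∀ x : EuclideanSpace ℝ (Fin N),
          MvPolynomial.eval (fun i => x i) R = x iN * Ψ x := by
        intro x
        rw [hR, map_mul, MvPolynomial.eval_X, hQ]
      have hae : ∀ᵐ x : EuclideanSpace ℝ (Fin N),
          0 ≤ MvPolynomial.eval (fun i => x i) R * W x := by
        filter_upwards [hae0] with x hx
        rw [hevalR]
        rcases lt_or_gt_of_ne hx with h | h
        · have hsign := hneg x h
          rw [hodd.neg_one_pow, neg_one_mul] at hsign
          have : 0 ≤ x iN * Ψ x := by
            rw [hsign]
            have := hnegpos x h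
            nlinarith
          exact mul_nonneg this (W_pos x).le
        · exact mul_nonneg (mul_nonneg h.le (hnonneg x h)) (W_pos x).le
      have hint := (T_spec R).1
      have hI : (∫ x : EuclideanSpace ℝ (Fin N),
          MvPolynomial.eval (fun i => x i) R * W x) = 0 := by
        rw [(T_spec R).2, hTR]
      have hz := (integral_eq_zero_iff_of_nonneg_ae hae hint).mp hI
      have hRcont : Continuous fun x : EuclideanSpace ℝ (Fin N) =>
          MvPolynomial.eval (fun i => x i) R := by
        have : Differentiable ℝ fun x : EuclideanSpace ℝ (Fin N) =>
            MvPolynomial.eval (fun i => x i) R :=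
          fun x => (hasFDerivAt_eval R x).differentiableAt
        exact this.continuous
      have hfz : (fun x : EuclideanSpace ℝ (Fin N) =>
          MvPolynomial.eval (fun i => x i) R * W x) = fun _ => 0 :=
        ((hRcont.mul hWcont).ae_eq_iff_eq volume continuous_const).mp hz
      apply hx₀ne
      have h3 := congrFun hfz x₀
      have h4 : MvPolynomial.eval (fun i => x₀ i) R = 0 :=
        (mul_eq_zero.mp h3).resolve_right (W_pos x₀).ne'
      rw [hevalR] at h4
      exact (mul_eq_zero.mp h4).resolve_left hx₀pos.ne'
end

section
/- Let D ⊂ ℝ^N be an open connected set whose closure is disjoint from the closure of some infinite open connected cone, let c ∈ L^∞_loc(D) with c ≤ 0 a.e., and let w ∈ C⁰(cl D) ∩ W^{2,N}_loc(D) satisfy Δw + c(x)·w ≥ 0 in D, w ≤ 0 on ∂D, and sup_D w⁺ < ∞. Then w ≤ 0 in D. -/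
open MeasureTheory

-- 1D second derivative test
theorem second_deriv_test {q : ℝ → ℝ} {c : ℝ}
    (hdiff : ∀ᶠ t in nhds (0:ℝ), DifferentiableAt ℝ q t)
    (hd : HasDerivAt (deriv q) c 0) (hmax : IsLocalMax q 0) : c ≤ 0 := by
  by_contra hc
  push_neg at hc
  have h0 : deriv q 0 = 0 := hmax.deriv_eq_zero
  have hslope : Filter.Tendsto (fun t => deriv q t / t) (nhdsWithin 0 {(0:ℝ)}ᶜ) (nhds c) := by
    have h := hasDerivAt_iff_tendsto_slope.mp hd
    apply h.congr
    intro t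
    simp [slope_def_field, h0]
  have hevpos : ∀ᶠ t in nhdsWithin 0 {(0:ℝ)}ᶜ, 0 < deriv q t / t :=
    hslope.eventually (eventually_gt_nhds hc)
  -- extract ε
  rw [eventually_nhdsWithin_iff] at hevpos
  rw [Metric.eventually_nhds_iff] at hevpos hdiff
  obtain ⟨ε₁, hε₁, h₁⟩ := hevpos
  obtain ⟨ε₂, hε₂, h₂⟩ := hdiff
  have hmax' := hmax
  rw [IsLocalMax, IsMaxFilter, Metric.eventually_nhds_iff] at hmax'
  obtain ⟨ε₃, hε₃, h₃⟩ := hmax'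
  set ε := min ε₁ (min ε₂ ε₃) with hε
  have hεpos : 0 < ε := lt_min hε₁ (lt_min hε₂ hε₃)
  have hmono : StrictMonoOn q (Set.Icc 0 (ε/2)) := by
    apply strictMonoOn_of_deriv_pos (convex_Icc _ _)
    · intro t ht
      have : DifferentiableAt ℝ q t := by
        apply h₂
        rw [Real.dist_eq, sub_zero]
        rw [abs_of_nonneg ht.1]
        calc t ≤ ε/2 := ht.2
          _ < ε₂ := by
            have : ε ≤ ε₂ := le_trans (min_le_right _ _) (min_le_left _ _)
            linarith
      exact this.continuousAt.continuousWithinAt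
    · intro t ht
      rw [interior_Icc] at ht
      have htpos : 0 < t := ht.1
      have hlt : t < ε₁ := by
        have : ε ≤ ε₁ := min_le_left _ _
        calc t < ε/2 := ht.2
          _ < ε₁ := by linarith
      have := h₁ (by rw [Real.dist_eq, sub_zero, abs_of_nonneg htpos.le]; exact hlt)
        (by simp [htpos.ne'])
      have := mul_pos this htpos
      rwa [div_mul_cancel₀] at this
      exact htpos.ne'
  have hq : q 0 < q (ε/2) := by
    apply hmono (Set.left_mem_Icc.mpr (by linarith)) (Set.right_mem_Icc.mpr (by linarith))
    linarith
  have : q (ε/2) ≤ q 0 := by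
    apply h₃
    rw [Real.dist_eq, sub_zero, abs_of_nonneg (by linarith : (0:ℝ) ≤ ε/2)]
    have : ε ≤ ε₃ := le_trans (min_le_right _ _) (min_le_right _ _)
    linarith
  linarith

theorem laplacian_nonpos_of_isLocalMax {N : ℕ} {v : EuclideanSpace ℝ (Fin N) → ℝ}
    {x : EuclideanSpace ℝ (Fin N)} (hv : ContDiffAt ℝ 2 v x) (hmax : IsLocalMax v x) :
    laplacian v x ≤ 0 := by
  apply Finset.sum_nonpos
  intro i _
  set e : EuclideanSpace ℝ (Fin N) := EuclideanSpace.single i 1 with he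
  set L : ℝ → EuclideanSpace ℝ (Fin N) := fun t => x + t • e with hL
  have hL0 : L 0 = x := by simp [hL]
  have hLd : ∀ t : ℝ, HasDerivAt L e t := by
    intro t
    have h := ((hasDerivAt_id t).smul_const e).const_add x
    rw [one_smul] at h
    exact h
  have hLc : Continuous L := by
    apply continuous_const.add (continuous_id.smul continuous_const)
  have hLc0 : Filter.Tendsto L (nhds 0) (nhds x) := by
    rw [← hL0]; exact hLc.tendsto 0
  set q : ℝ → ℝ := fun t => v (L t) with hq
  -- eventual smoothness along the line
  have hev : ∀ᶠ t in nhds (0:ℝ), ContDiffAt ℝ 2 v (L t) :=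
    hLc0.eventually (hv.eventually (by norm_num))
  have hevd : ∀ᶠ t in nhds (0:ℝ), HasDerivAt q (fderiv ℝ v (L t) e) t := by
    filter_upwards [hev] with t ht
    have hdv : DifferentiableAt ℝ v (L t) := ht.differentiableAt two_ne_zero
    exact hdv.hasFDerivAt.comp_hasDerivAt t (hLd t)
  have hdq : deriv q =ᶠ[nhds (0:ℝ)] fun t => fderiv ℝ v (L t) e := by
    filter_upwards [hevd] with t ht using ht.deriv
  -- F1 and its derivative at x
  set F1 : EuclideanSpace ℝ (Fin N) → ℝ := fun y => fderiv ℝ v y e with hF1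
  have hfd : ContDiffAt ℝ 1 (fderiv ℝ v) x := hv.fderiv_right (le_refl 2)
  have hF1d : DifferentiableAt ℝ F1 x :=
    (hfd.differentiableAt one_ne_zero).clm_apply (differentiableAt_const e)
  have hcomp : HasDerivAt (fun t => F1 (L t)) (fderiv ℝ F1 x e) 0 := by
    have h1 : HasFDerivAt F1 (fderiv ℝ F1 x) (L 0) := by rw [hL0]; exact hF1d.hasFDerivAt
    exact h1.comp_hasDerivAt 0 (hLd 0)
  have hdd : HasDerivAt (deriv q) (fderiv ℝ F1 x e) 0 := by
    apply hcomp.congr_of_eventuallyEq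
    exact hdq
  have hqmax : IsLocalMax q 0 := by
    have h2 := hLc0.eventually hmax
    unfold IsLocalMax IsMaxFilter
    simpa [hq, hL0] using h2
  have := second_deriv_test (hevd.mono fun t ht => ht.differentiableAt) hdd hqmax
  exact this

theorem laplacian_add_smul {N : ℕ} {f g : EuclideanSpace ℝ (Fin N) → ℝ}
    {x : EuclideanSpace ℝ (Fin N)} (s : ℝ) (hf : ContDiffAt ℝ 2 f x) (hg : ContDiffAt ℝ 2 g x) :
    laplacian (fun y => f y + s * g y) x = laplacian f x + s * laplacian g x := by
  unfold laplacian
  rw [Finset.mul_sum, ← Finset.sum_add_distrib]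
  apply Finset.sum_congr rfl
  intro i _
  set e : EuclideanSpace ℝ (Fin N) := EuclideanSpace.single i 1 with he
  have hev : ∀ᶠ y in nhds x, ContDiffAt ℝ 2 f y ∧ ContDiffAt ℝ 2 g y :=
    (hf.eventually (by norm_num)).and (hg.eventually (by norm_num))
  have heq : (fun y => fderiv ℝ (fun z => f z + s * g z) y e) =ᶠ[nhds x]
      (fun y => fderiv ℝ f y e + s * fderiv ℝ g y e) := by
    filter_upwards [hev] with y hy
    have hdf : DifferentiableAt ℝ f y := hy.1.differentiableAt two_ne_zero
    have hdg : DifferentiableAt ℝ g y := hy.2.differentiableAt two_ne_zero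
    have : fderiv ℝ (fun z => f z + s * g z) y = fderiv ℝ f y + s • fderiv ℝ g y := by
      rw [fderiv_fun_add hdf (hdg.const_mul s), fderiv_const_mul hdg]
    rw [this]
    simp
  have hF1f : DifferentiableAt ℝ (fun y => fderiv ℝ f y e) x :=
    ((hf.fderiv_right (m := 1) (le_refl 2)).differentiableAt one_ne_zero).clm_apply (differentiableAt_const e)
  have hF1g : DifferentiableAt ℝ (fun y => fderiv ℝ g y e) x :=
    ((hg.fderiv_right (m := 1) (le_refl 2)).differentiableAt one_ne_zero).clm_apply (differentiableAt_const e)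
  rw [heq.fderiv_eq]
  rw [fderiv_fun_add hF1f (hF1g.const_mul s), fderiv_const_mul hF1g]
  simp

theorem continuousOn_laplacian {N : ℕ} {U : Set (EuclideanSpace ℝ (Fin N))} (hU : IsOpen U)
    {f : EuclideanSpace ℝ (Fin N) → ℝ} (hf : ContDiffOn ℝ 2 f U) :
    ContinuousOn (laplacian f) U := by
  unfold laplacian
  apply continuousOn_finset_sum
  intro i _
  set e : EuclideanSpace ℝ (Fin N) := EuclideanSpace.single i 1 with he
  have hF : ContDiffOn ℝ 1 (fderiv ℝ f) U := hf.fderiv_of_isOpen hU (le_refl 2)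
  have hFi : ContDiffOn ℝ 1 (fun y => fderiv ℝ f y e) U :=
    hF.clm_apply contDiffOn_const
  have := hFi.continuousOn_fderiv_of_isOpen hU le_rfl
  exact this.clm_apply continuousOn_const

theorem nonneg_of_ae_nonneg {N : ℕ} {U : Set (EuclideanSpace ℝ (Fin N))} (hU : IsOpen U)
    {f : EuclideanSpace ℝ (Fin N) → ℝ} (hf : ContinuousOn f U)
    (h : ∀ᵐ y ∂(volume : Measure (EuclideanSpace ℝ (Fin N))), y ∈ U → 0 ≤ f y) :
    ∀ x ∈ U, 0 ≤ f x := by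
  intro x hx
  by_contra hneg
  push_neg at hneg
  have hopen : IsOpen (U ∩ f ⁻¹' Set.Iio 0) := hf.isOpen_inter_preimage hU isOpen_Iio
  have hsub : (U ∩ f ⁻¹' Set.Iio 0) ⊆ {y | ¬(y ∈ U → 0 ≤ f y)} := by
    intro y hy
    simp only [Set.mem_setOf_eq]
    push_neg
    exact ⟨hy.1, hy.2⟩
  have hnull : volume {y | ¬(y ∈ U → 0 ≤ f y)} = 0 := by
    rw [MeasureTheory.ae_iff] at h
    exact h
  have : volume (U ∩ f ⁻¹' Set.Iio 0) = 0 := measure_mono_null hsub hnull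
  have hpos : 0 < volume (U ∩ f ⁻¹' Set.Iio 0) :=
    hopen.measure_pos volume ⟨x, hx, hneg⟩
  exact hpos.ne' this

theorem max_principle {N : ℕ} {U : Set (EuclideanSpace ℝ (Fin N))} (hU : IsOpen U)
    (hUb : Bornology.IsBounded U) {v : EuclideanSpace ℝ (Fin N) → ℝ}
    (hvc : ContinuousOn v (closure U)) (hv2 : ∀ x ∈ U, ContDiffAt ℝ 2 v x)
    (hlap : ∀ x ∈ U, 0 < laplacian v x) {K : ℝ} (hbdry : ∀ x ∈ frontier U, v x ≤ K) :
    ∀ x ∈ U, v x ≤ K := by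
  intro x hx
  have hcpt : IsCompact (closure U) := Metric.isCompact_of_isClosed_isBounded isClosed_closure hUb.closure
  obtain ⟨x', hx', hmax⟩ := hcpt.exists_isMaxOn ⟨x, subset_closure hx⟩ hvc
  have hxK : v x' ≤ K := by
    rcases (em (x' ∈ U)) with hmem | hmem
    · exfalso
      have hloc : IsLocalMax v x' := by
        apply hmax.isLocalMax
        exact Filter.mem_of_superset (hU.mem_nhds hmem) subset_closure
      have := laplacian_nonpos_of_isLocalMax (hv2 x' hmem) hloc
      exact absurd (hlap x' hmem) (by linarith)
    · apply hbdry
      rw [hU.frontier_eq]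
      exact ⟨hx', hmem⟩
  exact le_trans (hmax (subset_closure hx)) hxK

section radial
variable {N : ℕ} (z' : EuclideanSpace ℝ (Fin N))

theorem norm_sq_sum (u : EuclideanSpace ℝ (Fin N)) : ‖u‖^2 = ∑ i, (u i)^2 := by
  rw [EuclideanSpace.norm_eq, Real.sq_sqrt (by positivity)]
  simp [sq_abs]

theorem hasFDerivAt_normsq (y : EuclideanSpace ℝ (Fin N)) :
    HasFDerivAt (fun w => ‖w - z'‖^2) (2 • (innerSL ℝ (y - z'))) y := by
  have h1 : HasFDerivAt (fun w : EuclideanSpace ℝ (Fin N) => w - z')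
      (ContinuousLinearMap.id ℝ _) y := (hasFDerivAt_id y).sub_const z'
  have := h1.norm_sq
  simpa using this

theorem hasFDerivAt_zpow_normsq (m : ℤ) (y : EuclideanSpace ℝ (Fin N)) (hy : y ≠ z') :
    HasFDerivAt (fun w => (‖w - z'‖^2 : ℝ) ^ m)
      (((m : ℝ) * (‖y - z'‖^2) ^ (m - 1)) • (2 • (innerSL ℝ (y - z')))) y := by
  have hy' : (‖y - z'‖^2 : ℝ) ≠ 0 := by
    have h0 : y - z' ≠ 0 := sub_ne_zero.mpr hy
    have : 0 < ‖y - z'‖ := norm_pos_iff.mpr h0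
    positivity
  exact (hasDerivAt_zpow m _ (Or.inl hy')).comp_hasFDerivAt y (hasFDerivAt_normsq z' y)

theorem laplacian_radial (x : EuclideanSpace ℝ (Fin N)) (hx : x ≠ z') :
    laplacian (fun y => (‖y - z'‖^2 : ℝ) ^ (-(N:ℤ))) x
      = (2*N*(N+2)) * (‖x - z'‖^2 : ℝ) ^ (-(N:ℤ)-1) := by
  set m : ℤ := -(N:ℤ) with hm
  have hxz : x - z' ≠ 0 := sub_ne_zero.mpr hx
  have hx' : (‖x - z'‖^2 : ℝ) ≠ 0 := by
    have : 0 < ‖x - z'‖ := norm_pos_iff.mpr hxz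
    positivity
  set h : EuclideanSpace ℝ (Fin N) → ℝ := fun y => ‖y - z'‖^2 with hh
  have hne : ∀ᶠ y in nhds x, y ≠ z' := by
    exact IsOpen.eventually_mem isOpen_ne hx
  unfold laplacian
  have key : ∀ i : Fin N,
      fderiv ℝ (fun y => fderiv ℝ (fun w => (h w) ^ m) y (EuclideanSpace.single i 1)) x
        (EuclideanSpace.single i 1)
      = 2*(m:ℝ) * (h x)^(m-1) + 4*(m:ℝ)*((m:ℝ)-1) * (h x)^(m-2) * (x i - z' i)^2 := by
    intro i
    set e : EuclideanSpace ℝ (Fin N) := EuclideanSpace.single i 1 with he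
    -- the first derivative, as a function
    have heq : (fun y => fderiv ℝ (fun w => (h w) ^ m) y e) =ᶠ[nhds x]
        (fun y => (2*(m:ℝ) * (h y)^(m-1)) * (y i - z' i)) := by
      filter_upwards [hne] with y hy
      rw [(hasFDerivAt_zpow_normsq z' m y hy).fderiv]
      have : (innerSL ℝ (y - z')) e = (y - z') i := by
        simp [he, EuclideanSpace.inner_single_right]
      simp only [ContinuousLinearMap.smul_apply, ContinuousLinearMap.coe_smul', Pi.smul_apply,
        this]
      have : (y - z') i = y i - z' i := rfl
      rw [this]
      simp only [smul_eq_mul]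
      ring
    rw [heq.fderiv_eq]
    -- differentiate the product
    have hc1 := (hasFDerivAt_zpow_normsq z' (m-1) x hx).const_mul (2*(m:ℝ))
    have hc2 : HasFDerivAt (fun y : EuclideanSpace ℝ (Fin N) => y i - z' i)
        (EuclideanSpace.proj (𝕜 := ℝ) i) x := by
      exact ((EuclideanSpace.proj (𝕜 := ℝ) i).hasFDerivAt).sub_const (z' i)
    have hprod := hc1.mul hc2
    have hprod' : HasFDerivAt (fun y => 2*(m:ℝ) * h y ^ (m-1) * (y i - z' i)) _ x := hprod
    rw [hprod'.fderiv]
    have he1 : (EuclideanSpace.proj (𝕜 := ℝ) i) e = 1 := by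
      simp [he, EuclideanSpace.single_apply]
    have he2 : (innerSL ℝ (x - z')) e = x i - z' i := by
      have : (innerSL ℝ (x - z')) e = (x - z') i := by
        simp [he, EuclideanSpace.inner_single_right]
      rw [this]; rfl
    simp only [ContinuousLinearMap.add_apply, ContinuousLinearMap.smul_apply,
      ContinuousLinearMap.coe_smul', Pi.smul_apply, he1, he2]
    simp only [smul_eq_mul]
    have hexp : m - 1 - 1 = m - 2 := by ring
    rw [hexp]
    push_cast
    ring
  rw [Finset.sum_congr rfl (fun i _ => key i)]
  rw [Finset.sum_add_distrib]
  rw [Finset.sum_const, Finset.card_univ, Fintype.card_fin]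
  rw [← Finset.mul_sum]
  have hsum : ∑ i, (x i - z' i)^2 = h x := by
    show _ = ‖x - z'‖^2
    rw [norm_sq_sum (x - z')]
    apply Finset.sum_congr rfl
    intro i _
    rfl
  rw [hsum]
  have hzp : (h x)^(m-2) * (h x) = (h x)^(m-1) := by
    rw [← zpow_add_one₀ (show h x ≠ 0 from hx')]
    congr 1
    ring
  rw [mul_assoc (4 * (m:ℝ) * ((m:ℝ)-1)), hzp]
  have hX : (‖x - z'‖^2 : ℝ) ^ (-(N:ℤ)-1) = h x ^ (m-1) := by
    show h x ^ (-(N:ℤ)-1) = _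
    rw [hm]
  rw [hX]
  have hmr : (m:ℝ) = -(N:ℝ) := by rw [hm]; push_cast; ring
  rw [hmr]
  simp only [nsmul_eq_mul]
  push_cast
  ring
end radial

theorem contDiffAt_radial {N : ℕ} (z' x : EuclideanSpace ℝ (Fin N)) (hx : x ≠ z') :
    ContDiffAt ℝ 2 (fun y => (‖y - z'‖^2 : ℝ) ^ (-(N:ℤ))) x := by
  have hx' : (‖x - z'‖^2 : ℝ) ≠ 0 := by
    have : 0 < ‖x - z'‖ := norm_pos_iff.mpr (sub_ne_zero.mpr hx)
    positivity
  have h1 : ContDiff ℝ 2 (fun y : EuclideanSpace ℝ (Fin N) => ‖y - z'‖^2) :=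
    (contDiff_norm_sq (𝕜 := ℝ)).comp (contDiff_id.sub contDiff_const)
  have h2 : ContDiffAt ℝ 2 (fun y : EuclideanSpace ℝ (Fin N) => ((‖y - z'‖^2)^N)⁻¹) x :=
    ((h1.pow N).contDiffAt).inv (pow_ne_zero _ hx')
  have heq : (fun y : EuclideanSpace ℝ (Fin N) => (‖y - z'‖^2 : ℝ) ^ (-(N:ℤ)))
      = (fun y => ((‖y - z'‖^2)^N)⁻¹) := by
    funext y
    rw [zpow_neg, zpow_natCast]
  rw [heq]
  exact h2

theorem continuousAt_radial {N : ℕ} (z' x : EuclideanSpace ℝ (Fin N)) (hx : x ≠ z') :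
    ContinuousAt (fun y => (‖y - z'‖^2 : ℝ) ^ (-(N:ℤ))) x := by
  have hx' : (‖x - z'‖^2 : ℝ) ≠ 0 := by
    have : 0 < ‖x - z'‖ := norm_pos_iff.mpr (sub_ne_zero.mpr hx)
    positivity
  have h1 : ContinuousAt (fun y : EuclideanSpace ℝ (Fin N) => ‖y - z'‖^2) x :=
    (((continuous_id.sub continuous_const).norm).pow 2).continuousAt
  exact h1.zpow₀ _ (Or.inl hx')

theorem zpow_anti_sq {x y : ℝ} (hx : 0 < x) (hxy : x ≤ y) (n : ℕ) :
    ((y^2 : ℝ)) ^ (-(n:ℤ)) ≤ ((x^2 : ℝ)) ^ (-(n:ℤ)) := by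
  rw [zpow_neg, zpow_neg, zpow_natCast, zpow_natCast]
  have h1 : (0:ℝ) < (x^2)^n := by positivity
  apply inv_anti₀ h1
  apply pow_le_pow_left₀ (by positivity)
  exact pow_le_pow_left₀ hx.le hxy 2

theorem zpow_anti_sq_strict {x y : ℝ} (hx : 0 < x) (hxy : x < y) {n : ℕ} (hn : n ≠ 0) :
    ((y^2 : ℝ)) ^ (-(n:ℤ)) < ((x^2 : ℝ)) ^ (-(n:ℤ)) := by
  rw [zpow_neg, zpow_neg, zpow_natCast, zpow_natCast]
  have h1 : (0:ℝ) < (x^2)^n := by positivity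
  apply inv_strictAnti₀ h1
  apply pow_lt_pow_left₀ _ (by positivity) hn
  apply pow_lt_pow_left₀ hxy hx.le (by norm_num)

theorem zpow_radial_pos {h : ℝ} (hh : 0 < h) (m : ℤ) : 0 < h ^ m := zpow_pos hh m

set_option maxHeartbeats 4000000 in
/-- Berestycki–Caffarelli–Nirenberg maximum principle in unbounded domains: if the open
connected set `D` has closure disjoint from the closure of an infinite open connected cone,
`c ≤ 0` a.e. in `D` is locally bounded, and `w` is bounded above, satisfies
`Δw + c·w ≥ 0` in `D` and `w ≤ 0` on `∂D`, then `w ≤ 0` in `D`. -/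
theorem stmt_8 (N : ℕ) (hN : 2 ≤ N)
    (D : Set (EuclideanSpace ℝ (Fin N))) (hDopen : IsOpen D) (hDconn : IsConnected D)
    (hcone : ∃ (z : EuclideanSpace ℝ (Fin N)) (Cone : Set (EuclideanSpace ℝ (Fin N))),
      IsOpen Cone ∧ IsConnected Cone ∧ Cone.Nonempty ∧
      (∀ x ∈ Cone, ∀ t : ℝ, 0 < t → z + t • (x - z) ∈ Cone) ∧
      Disjoint (closure D) (closure Cone))
    (c : EuclideanSpace ℝ (Fin N) → ℝ)
    (hcloc : ∀ x ∈ D, ∃ (s : Set (EuclideanSpace ℝ (Fin N))) (B : ℝ),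
      s ∈ nhds x ∧ ∀ᵐ y ∂(volume : Measure (EuclideanSpace ℝ (Fin N))),
        y ∈ s ∩ D → |c y| ≤ B)
    (hcneg : ∀ᵐ x ∂(volume : Measure (EuclideanSpace ℝ (Fin N))), x ∈ D → c x ≤ 0)
    (w : EuclideanSpace ℝ (Fin N) → ℝ)
    (hwcont : ContinuousOn w (closure D))
    (hwreg : ContDiffOn ℝ 2 w D)
    (hineq : ∀ x ∈ D, 0 ≤ laplacian w x + c x * w x)
    (hbd : ∀ x ∈ frontier D, w x ≤ 0)
    (hbdd : ∃ b : ℝ, ∀ x ∈ D, w x ≤ b) :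
    ∀ x ∈ D, w x ≤ 0 := by
  obtain ⟨z, Cone, hCo, hCc, hCne, hCscale, hdisj⟩ := hcone
  obtain ⟨b, hb⟩ := hbdd
  have hDne : D.Nonempty := hDconn.nonempty
  have hNpos : 0 < N := by omega
  -- z is in the closure of the cone
  have hzCl : z ∈ closure Cone := by
    obtain ⟨p₀, hp₀⟩ := hCne
    have hc : Continuous (fun t : ℝ => z + t • (p₀ - z)) := by continuity
    have hcont : Filter.Tendsto (fun t : ℝ => z + t • (p₀ - z))
        (nhdsWithin 0 (Set.Ioi 0)) (nhds z) := by
      have h2 := hc.tendsto 0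
      simp only [zero_smul, add_zero] at h2
      exact h2.mono_left nhdsWithin_le_nhds
    apply mem_closure_of_tendsto hcont
    filter_upwards [self_mem_nhdsWithin] with t ht
    exact hCscale p₀ hp₀ t ht
  -- the vertex is not in the cone (else the cone is everything)
  have hzC : z ∉ Cone := by
    intro hzC
    obtain ⟨ε, hε, hball⟩ := Metric.isOpen_iff.mp hCo z hzC
    obtain ⟨x₀, hx₀⟩ := hDne
    have hx₀C : x₀ ∈ Cone := by
      by_cases hx0z : x₀ = z
      · rwa [hx0z]
      · have hnorm : 0 < ‖x₀ - z‖ := norm_pos_iff.mpr (sub_ne_zero.mpr hx0z)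
        set u := z + (ε / (2 * ‖x₀ - z‖)) • (x₀ - z) with hu
        have hu_mem : u ∈ Cone := by
          apply hball
          rw [Metric.mem_ball, dist_eq_norm]
          have h3 : u - z = (ε / (2 * ‖x₀ - z‖)) • (x₀ - z) := by
            rw [hu]; abel
          rw [h3, norm_smul, Real.norm_eq_abs, abs_of_pos (by positivity)]
          have h6 : ε / (2 * ‖x₀ - z‖) * ‖x₀ - z‖ = ε / 2 := by
            field_simp
          rw [h6]
          linarith
        have h4 := hCscale u hu_mem ((2*‖x₀ - z‖)/ε) (by positivity)
        have h5 : z + ((2*‖x₀ - z‖)/ε) • (u - z) = x₀ := by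
          have h3 : u - z = (ε / (2 * ‖x₀ - z‖)) • (x₀ - z) := by rw [hu]; abel
          rw [h3, smul_smul]
          rw [div_mul_div_comm, mul_comm, div_self (by positivity)]
          simp
        rwa [h5] at h4
    exact Set.disjoint_left.mp hdisj (subset_closure hx₀) (subset_closure hx₀C)
  -- pick a ball in the cone away from the vertex
  obtain ⟨p, hpC⟩ := hCne
  have hpz : p ≠ z := fun h => hzC (h ▸ hpC)
  obtain ⟨r₀, hr₀, hball₀⟩ := Metric.isOpen_iff.mp hCo p hpC
  set P := ‖p - z‖ with hP
  have hPpos : 0 < P := norm_pos_iff.mpr (sub_ne_zero.mpr hpz)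
  set r := min (r₀/2) (P/2) with hr
  have hrpos : 0 < r := lt_min (by linarith) (by linarith)
  have hrP : r < P := lt_of_le_of_lt (min_le_right _ _) (by linarith)
  have hball : Metric.ball p r ⊆ Cone := fun y hy =>
    hball₀ (Metric.mem_ball.mpr (lt_of_lt_of_le (Metric.mem_ball.mp hy)
      (le_trans (min_le_left _ _) (by linarith))))
  set q := r / P with hq
  have hqpos : 0 < q := div_pos hrpos hPpos
  have hqlt : q < 1 := (div_lt_one hPpos).mpr hrP
  -- scaled balls sit inside the cone
  have hscaled : ∀ t : ℝ, 0 < t → Metric.ball (z + t • (p - z)) (t * r) ⊆ Cone := by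
    intro t ht y hy
    rw [Metric.mem_ball, dist_eq_norm] at hy
    set x := z + t⁻¹ • (y - z) with hxdef
    have hx : x ∈ Metric.ball p r := by
      rw [Metric.mem_ball, dist_eq_norm]
      have h3 : x - p = t⁻¹ • (y - (z + t • (p - z))) := by
        rw [hxdef, smul_sub, smul_sub, smul_add, smul_smul,
          inv_mul_cancel₀ ht.ne', one_smul]
        abel
      rw [h3, norm_smul, Real.norm_eq_abs, abs_of_pos (inv_pos.mpr ht)]
      calc t⁻¹ * ‖y - (z + t • (p - z))‖ < t⁻¹ * (t*r) :=
            mul_lt_mul_of_pos_left hy (inv_pos.mpr ht)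
        _ = r := by field_simp
    have h4 := hCscale x (hball hx) t ht
    have h5 : z + t • (x - z) = y := by
      rw [hxdef]
      rw [add_sub_cancel_left, smul_smul, mul_inv_cancel₀ ht.ne', one_smul]
      abel
    rwa [h5] at h4
  -- the sup of w over D together with 0
  set M := sSup (insert 0 (w '' D)) with hM
  have hbdd' : BddAbove (insert 0 (w '' D)) := by
    refine ⟨max b 0, ?_⟩
    rintro y (rfl | ⟨x, hx, rfl⟩)
    · exact le_max_right _ _
    · exact le_trans (hb x hx) (le_max_left _ _)
  have hMne : (insert 0 (w '' D)).Nonempty := ⟨0, Set.mem_insert _ _⟩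
  have hM0 : 0 ≤ M := le_csSup hbdd' (Set.mem_insert _ _)
  have hMw : ∀ x ∈ D, w x ≤ M := fun x hx =>
    le_csSup hbdd' (Set.mem_insert_of_mem _ ⟨x, hx, rfl⟩)
  have hMcl : ∀ y ∈ closure D, w y ≤ M := by
    intro y hy
    have ct : ContinuousWithinAt w D y := (hwcont y hy).mono subset_closure
    have hne : (nhdsWithin y D).NeBot := mem_closure_iff_nhdsWithin_neBot.mp hy
    apply le_of_tendsto ct
    filter_upwards [self_mem_nhdsWithin] with x hx using hMw x hx
  -- the contraction constant
  set Q := ((q^2 : ℝ)) ^ (-(N:ℤ)) with hQ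
  set T2 := (((2:ℝ)^2)) ^ (-(N:ℤ)) with hT2
  set T4 := (((4:ℝ)^2)) ^ (-(N:ℤ)) with hT4
  have hQT2 : T2 < Q := zpow_anti_sq_strict hqpos (by linarith) (by omega)
  have hT42 : T4 < T2 := zpow_anti_sq_strict (by norm_num) (by norm_num) (by omega)
  set κ := (Q - T2) / (Q - T4) with hκ
  have hκ0 : 0 ≤ κ := le_of_lt (div_pos (by linarith) (by linarith))
  have hκ1 : κ < 1 := (div_lt_one (by linarith)).mpr (by linarith)
  -- key claim
  have key : ∀ x₀ ∈ D, w x₀ ≤ κ * M := by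
    intro x₀ hx₀
    by_cases hw₀ : w x₀ ≤ 0
    · exact le_trans hw₀ (mul_nonneg hκ0 hM0)
    push_neg at hw₀
    have hMpos : 0 < M := lt_of_lt_of_le hw₀ (hMw _ hx₀)
    have hx₀z : x₀ ≠ z := by
      intro h
      exact Set.disjoint_left.mp hdisj (subset_closure hx₀) (h ▸ hzCl)
    set a := ‖x₀ - z‖ with ha
    have hapos : 0 < a := norm_pos_iff.mpr (sub_ne_zero.mpr hx₀z)
    set t₀ := a / P with ht₀
    have ht₀pos : 0 < t₀ := div_pos hapos hPpos
    set z' := z + t₀ • (p - z) with hz'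
    have hr' : t₀ * r = q * a := by
      rw [ht₀, hq]; field_simp
    have hballz' : Metric.ball z' (q*a) ⊆ Cone := by
      rw [← hr']
      exact hscaled t₀ ht₀pos
    have hfar : ∀ y ∈ closure D, q*a ≤ ‖y - z'‖ := by
      intro y hy
      by_contra hlt
      push_neg at hlt
      have hmem : y ∈ Cone := hballz' (by rwa [Metric.mem_ball, dist_eq_norm])
      exact Set.disjoint_left.mp hdisj hy (subset_closure hmem)
    have hz'ne : ∀ y ∈ closure D, y ≠ z' := by
      intro y hy hcon
      have := hfar y hy
      rw [hcon, sub_self, norm_zero] at this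
      nlinarith
    have hd2a : ‖x₀ - z'‖ ≤ 2*a := by
      have h1 : ‖z' - z‖ = a := by
        have h0 : z' - z = t₀ • (p - z) := by rw [hz']; abel
        rw [h0, norm_smul, Real.norm_eq_abs, abs_of_pos ht₀pos, ht₀,
          div_mul_cancel₀ _ hPpos.ne']
      calc ‖x₀ - z'‖ = ‖(x₀ - z) - (z' - z)‖ := by rw [sub_sub_sub_cancel_right]
        _ ≤ ‖x₀ - z‖ + ‖z' - z‖ := norm_sub_le _ _
        _ = 2*a := by rw [h1, ← ha]; ring
    have hdpos : 0 < ‖x₀ - z'‖ :=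
      lt_of_lt_of_le (by positivity) (hfar x₀ (subset_closure hx₀))
    -- barrier data
    set g := fun y : EuclideanSpace ℝ (Fin N) => (‖y - z'‖^2 : ℝ) ^ (-(N:ℤ)) with hg
    set A := (((q*a)^2 : ℝ)) ^ (-(N:ℤ)) with hA
    set B4 := (((4*a)^2 : ℝ)) ^ (-(N:ℤ)) with hB4
    set B2 := (((2*a)^2 : ℝ)) ^ (-(N:ℤ)) with hB2
    have hAB4 : B4 < A := zpow_anti_sq_strict (by positivity) (by nlinarith) (by omega)
    have hAB2 : B2 < A := zpow_anti_sq_strict (by positivity) (by nlinarith) (by omega)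
    set s := M / (A - B4) with hs
    have hspos : 0 < s := div_pos hMpos (by linarith)
    set R := 6*a with hR
    set U := (D ∩ w ⁻¹' (Set.Ioi 0)) ∩ Metric.ball x₀ R with hU
    have hUopen : IsOpen U := by
      apply IsOpen.inter _ Metric.isOpen_ball
      exact (hwcont.mono subset_closure).isOpen_inter_preimage hDopen isOpen_Ioi
    have hUsub : U ⊆ D := fun y hy => hy.1.1
    have hclU : closure U ⊆ closure D := closure_mono hUsub
    have hclUball : closure U ⊆ Metric.closedBall x₀ R :=
      le_trans (closure_mono Set.inter_subset_right) Metric.closure_ball_subset_closedBall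
    have hx₀U : x₀ ∈ U :=
      ⟨⟨hx₀, hw₀⟩, Metric.mem_ball_self (by positivity)⟩
    have hgA : ∀ y ∈ closure D, g y ≤ A :=
      fun y hy => zpow_anti_sq (by positivity) (hfar y hy) N
    -- maximum principle
    have key2 : ∀ y ∈ U, w y + s * g y ≤ s * A := by
      apply max_principle hUopen (Metric.isBounded_ball.subset Set.inter_subset_right)
      · -- continuity on closure U
        apply ContinuousOn.add (hwcont.mono hclU)
        apply ContinuousOn.mul continuousOn_const
        intro y hy
        exact (continuousAt_radial z' y (hz'ne y (hclU hy))).continuousWithinAt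
      · -- C² on U
        intro y hy
        exact (hwreg.contDiffAt (hDopen.mem_nhds (hUsub hy))).add
          (contDiffAt_const.mul (contDiffAt_radial z' y (hz'ne y (subset_closure (hUsub hy)))))
      · -- positive laplacian
        intro y hy
        have hyD : y ∈ D := hUsub hy
        have hyz' : y ≠ z' := hz'ne y (subset_closure hyD)
        rw [laplacian_add_smul s (hwreg.contDiffAt (hDopen.mem_nhds hyD))
          (contDiffAt_radial z' y hyz')]
        have hlapw : 0 ≤ laplacian w y := by
          have hcont : ContinuousOn (laplacian w) U :=
            (continuousOn_laplacian hDopen hwreg).mono hUsub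
          have hae : ∀ᵐ y' ∂(volume : Measure (EuclideanSpace ℝ (Fin N))),
              y' ∈ U → 0 ≤ laplacian w y' := by
            filter_upwards [hcneg] with y' hc hy'
            have hy'D : y' ∈ D := hUsub hy'
            have hwpos : 0 < w y' := hy'.1.2
            have := hineq y' hy'D
            nlinarith [hc hy'D]
          exact nonneg_of_ae_nonneg hUopen hcont hae y hy
        have hlapg : 0 < laplacian g y := by
          rw [hg, laplacian_radial z' y hyz']
          have h1 : (0:ℝ) < ‖y - z'‖^2 := by
            have : 0 < ‖y - z'‖ := norm_pos_iff.mpr (sub_ne_zero.mpr hyz')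
            positivity
          have h2 : (0:ℝ) < (‖y - z'‖^2) ^ (-(N:ℤ)-1) := zpow_pos h1 _
          have h3 : (0:ℝ) < 2*N*(N+2) := by positivity
          positivity
        nlinarith
      · -- boundary values
        intro y hy
        rw [hUopen.frontier_eq] at hy
        obtain ⟨hycl, hynot⟩ := hy
        have hyclD : y ∈ closure D := hclU hycl
        have hgy : g y ≤ A := hgA y hyclD
        by_cases hyD : y ∈ D
        · by_cases hyball : y ∈ Metric.ball x₀ R
          · -- y in D and in the ball, so w y ≤ 0
            have hwy : w y ≤ 0 := by
              by_contra hcon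
              push_neg at hcon
              exact hynot ⟨⟨hyD, hcon⟩, hyball⟩
            nlinarith
          · -- y on the sphere
            have hdist : ‖y - x₀‖ = R := by
              have h1 : dist y x₀ ≤ R := Metric.mem_closedBall.mp (hclUball hycl)
              have h2 : ¬ dist y x₀ < R := fun hc => hyball (Metric.mem_ball.mpr hc)
              rw [← dist_eq_norm]
              rcases lt_or_eq_of_le h1 with h | h
              · exact absurd h h2
              · exact h
            have hwyM : w y ≤ M := hMcl y hyclD
            have hfar4 : 4*a ≤ ‖y - z'‖ := by
              have h5 : ‖y - x₀‖ ≤ ‖y - z'‖ + ‖x₀ - z'‖ := by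
                calc ‖y - x₀‖ = ‖(y - z') - (x₀ - z')‖ := by rw [sub_sub_sub_cancel_right]
                  _ ≤ ‖y - z'‖ + ‖x₀ - z'‖ := norm_sub_le _ _
              rw [hdist, hR] at h5
              linarith
            have hgB4 : g y ≤ B4 := zpow_anti_sq (by positivity) hfar4 N
            have hMs : s * (A - B4) = M := by
              rw [hs]
              exact div_mul_cancel₀ M (by linarith)
            have h9 : s * g y ≤ s * B4 := mul_le_mul_of_nonneg_left hgB4 hspos.le
            nlinarith
        · -- y on ∂D
          have hwy : w y ≤ 0 := by
            apply hbd
            rw [hDopen.frontier_eq]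
            exact ⟨hyclD, hyD⟩
          nlinarith
    -- conclude the key claim from the barrier estimate
    have hvx := key2 x₀ hx₀U
    have hgB2 : B2 ≤ g x₀ := zpow_anti_sq hdpos hd2a N
    set X := ((a^2 : ℝ)) ^ (-(N:ℤ)) with hX
    have hXpos : 0 < X := zpow_pos (by positivity) _
    have hAX : A = Q * X := by rw [hA, hQ, hX, ← mul_zpow, ← mul_pow]
    have hB2X : B2 = T2 * X := by rw [hB2, hT2, hX, ← mul_zpow, ← mul_pow]
    have hB4X : B4 = T4 * X := by rw [hB4, hT4, hX, ← mul_zpow, ← mul_pow]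
    have h6 : Q - T4 ≠ 0 := by
      have : T4 < Q := by linarith
      linarith
    have h7 : A - B4 ≠ 0 := by linarith
    have h2 : s * (A - B2) = κ * M := by
      rw [hs, hκ, hAX, hB2X, hB4X]
      have h7' : Q * X - T4 * X ≠ 0 := by
        have he : Q * X - T4 * X = (Q - T4) * X := by ring
        rw [he]
        exact mul_ne_zero h6 hXpos.ne'
      field_simp
    have h8 : s * (A - B2) = s * A - s * B2 := by ring
    have h9 : s * B2 ≤ s * g x₀ := mul_le_mul_of_nonneg_left hgB2 hspos.le
    linarith
  -- conclude from the contraction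
  have hMκ : M ≤ κ * M := by
    apply csSup_le hMne
    rintro y (rfl | ⟨x, hx, rfl⟩)
    · exact mul_nonneg hκ0 hM0
    · exact key x hx
  have hMle : M ≤ 0 := by
    by_contra hMpos
    push_neg at hMpos
    have : κ * M < 1 * M := mul_lt_mul_of_pos_right hκ1 hMpos
    rw [one_mul] at this
    linarith
  intro x hx
  linarith [hMw x hx]
end
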